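/- Let G be a connected complex reductive group with maximal torus T and Weyl group W(G) = N_G(T)/T. Let A be a subgroup of T and M = Z_G(A) its centralizer. Then the pointwise stabilizer of A in W(G), namely W(G)_A = {w ∈ W(G) : w(t) = t for all t ∈ A}, equals N_M(T)/T. -/

import Mathlib

/-- Let G be a connected complex reductive group with maximal torus T and
Weyl group W(G) = N_G(T)/T.  Let A be a subgroup of T and M = Z_G(A) its centralizer.
Then the pointwise stabilizer of A in W(G) equals N_M(T)/T.

We model G as an abstract group, T as a commutative subgroup, A ≤ T, and
M = Z_G(A) = `Subgroup.centralizer A`.  The Weyl group is N_G(T)/T; since T is abelian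
and A ≤ T, the condition "w fixes A pointwise" is independent of the choice of a
representative n of w, and N_M(T)/T is realised as the image in N_G(T)/T of
N_G(T) ∩ M. -/
theorem stmt9 (G : Type*) [Group G] (T A : Subgroup G) (hAT : A ≤ T)
    (hT : ∀ x ∈ T, ∀ y ∈ T, x * y = y * x) :
    {q : (Subgroup.normalizer (T : Set G)) ⧸ T.subgroupOf (Subgroup.normalizer (T : Set G)) |
        ∀ n : (Subgroup.normalizer (T : Set G)), QuotientGroup.mk n = q →
          ∀ a ∈ A, (n : G) * a * (n : G)⁻¹ = a}
      =
    {q : (Subgroup.normalizer (T : Set G)) ⧸ T.subgroupOf (Subgroup.normalizer (T : Set G)) |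
        ∃ n : (Subgroup.normalizer (T : Set G)), QuotientGroup.mk n = q ∧
          (n : G) ∈ Subgroup.centralizer (A : Set G)} := by
  ext q
  simp only [Set.mem_setOf_eq]
  constructor
  · intro h
    obtain ⟨n, hn⟩ := QuotientGroup.mk_surjective q
    refine ⟨n, hn, Subgroup.mem_centralizer_iff.mpr fun a ha => ?_⟩
    have h1 := h n hn a ha
    calc a * (n : G) = ((n : G) * a * (n : G)⁻¹) * (n : G) := by rw [h1]
      _ = (n : G) * a := by group
  · rintro ⟨n, hn, hc⟩ n' hn' a ha
    have heq : (QuotientGroup.mk n : (Subgroup.normalizer (T : Set G)) ⧸ T.subgroupOf (Subgroup.normalizer (T : Set G)))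
        = QuotientGroup.mk n' := hn.trans hn'.symm
    have ht : ((n : G)⁻¹ * (n' : G)) ∈ T := by
      have := QuotientGroup.eq.mp heq
      simpa [Subgroup.mem_subgroupOf] using this
    set t : G := (n : G)⁻¹ * (n' : G) with htdef
    have hn'eq : (n' : G) = (n : G) * t := by rw [htdef]; group
    have haT : (a : G) ∈ T := hAT ha
    have hcomm : t * a = a * t := hT t ht a haT
    have hca : (a : G) * (n : G) = (n : G) * a :=
      Subgroup.mem_centralizer_iff.mp hc a ha
    have hfix : (n : G) * a * (n : G)⁻¹ = a := by
      rw [← hca]; group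
    rw [hn'eq, mul_inv_rev, show (n:G) * t * a * (t⁻¹ * (n:G)⁻¹)
        = (n:G) * (t * a * t⁻¹) * (n:G)⁻¹ by group,
      show t * a * t⁻¹ = a by rw [hcomm]; group, hfix]
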